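/- Let α ⊨ n, let E be an equivalence class of SRCT(α) under ∼_α, let τ_source be a source tableau in E, and let m be the smallest element of DRN(α,E). Then the distinguished removable node in column m of τ_source contains the entry 1. -/

import Mathlib

/-- Cell `(r,c)` (0-indexed: row `r` from the top, column `c` from the left) of the
reverse composition diagram of the composition `α`. -/
def IsCell (α : List ℕ) (r c : ℕ) : Prop := r < α.length ∧ c < α.getD r 0

instance (α : List ℕ) (r c : ℕ) : Decidable (IsCell α r c) :=
  inferInstanceAs (Decidable (r < α.length ∧ c < α.getD r 0))

/-- A standard reverse composition tableau (SRCT) of shape `α`: a bijective filling of the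
reverse composition diagram of `α` by `{1,…,α.sum}` (with the junk value `0` off the diagram)
whose rows decrease from left to right, whose first column increases from top to bottom,
and which satisfies the triple rule. -/
structure SRCT (α : List ℕ) where
  entry : ℕ → ℕ → ℕ
  zero_off : ∀ r c, ¬ IsCell α r c → entry r c = 0
  one_le : ∀ r c, IsCell α r c → 1 ≤ entry r c
  le_sum : ∀ r c, IsCell α r c → entry r c ≤ α.sum
  inj : ∀ r c r' c', IsCell α r c → IsCell α r' c' → entry r c = entry r' c' → r = r' ∧ c = c'
  surj : ∀ m, 1 ≤ m → m ≤ α.sum → ∃ r c, IsCell α r c ∧ entry r c = m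
  row_dec : ∀ r c, IsCell α r (c + 1) → entry r (c + 1) < entry r c
  col1_inc : ∀ r r', r < r' → IsCell α r 0 → IsCell α r' 0 → entry r 0 < entry r' 0
  triple : ∀ r r' c, r < r' → IsCell α r c → IsCell α r' (c + 1) →
    entry r' (c + 1) < entry r c → IsCell α r (c + 1) ∧ entry r' (c + 1) < entry r (c + 1)

/-- `i` is a descent of `T`: `i+1` appears weakly right of `i`. -/
def Descent (α : List ℕ) (T : SRCT α) (i : ℕ) : Prop :=
  ∃ r c r' c', IsCell α r c ∧ IsCell α r' c' ∧
    T.entry r c = i ∧ T.entry r' c' = i + 1 ∧ c ≤ c'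

/-- `i` and `i+1` are attacking in `T`: same column, or adjacent columns with `i+1`
strictly southeast of `i`. -/
def Attacking (α : List ℕ) (T : SRCT α) (i : ℕ) : Prop :=
  ∃ r c r' c', IsCell α r c ∧ IsCell α r' c' ∧
    T.entry r c = i ∧ T.entry r' c' = i + 1 ∧ (c' = c ∨ (c' = c + 1 ∧ r < r'))

/-- The entry function of the filling `s_i(T)` obtained from `T` by interchanging the
positions of the entries `i` and `i+1`. -/
def swapEntry (α : List ℕ) (T : SRCT α) (i : ℕ) : ℕ → ℕ → ℕ := fun r c =>
  if T.entry r c = i then i + 1 else if T.entry r c = i + 1 then i else T.entry r c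

def maxPart (α : List ℕ) : ℕ := α.foldr max 0

/-- The entries of column `c` of `T`, read from top to bottom. -/
def colList (α : List ℕ) (T : SRCT α) (c : ℕ) : List ℕ :=
  (List.range α.length).filterMap fun r => if IsCell α r c then some (T.entry r c) else none

/-- The column word of `T`: entries of each column read top to bottom, columns left to right,
viewed as a permutation of `{1,…,n}` in one-line notation. -/
def colWord (α : List ℕ) (T : SRCT α) : List ℕ :=
  (List.range (maxPart α)).flatMap fun c => colList α T c

/-- The inversion set of a one-line word: pairs of positions `p < q` with `w_p > w_q`. -/
def invFinset (w : List ℕ) : Finset (ℕ × ℕ) :=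
  (Finset.range w.length ×ˢ Finset.range w.length).filter fun pq =>
    pq.1 < pq.2 ∧ w.getD pq.2 0 < w.getD pq.1 0

/-- The number of inversions, i.e. the Coxeter length of the one-line word. -/
def invCount (w : List ℕ) : ℕ := (invFinset w).card

/-- The standardization of a word with distinct letters, with ranks `1,…,len`. -/
def stdWord (w : List ℕ) : List ℕ :=
  w.map fun x => (w.filter fun y => decide (y ≤ x)).length

/-- The standardized column word of `T`: concatenation over columns (left to right) of the
standardizations of the column reading words (top to bottom). -/
def stWord (α : List ℕ) (T : SRCT α) : List ℕ :=
  (List.range (maxPart α)).flatMap fun c => stdWord (colList α T c)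

/-- The equivalence class of `T0` under `∼_α` (equal standardized column words). -/
def stClass (α : List ℕ) (T0 : SRCT α) : Set (SRCT α) := {T | stWord α T = stWord α T0}

/-- `T` is a source tableau: for every non-descent `i ≠ n`, the entry `i+1` lies in the cell
immediately to the left of the cell containing `i`. -/
def IsSource (α : List ℕ) (T : SRCT α) : Prop :=
  ∀ i, 1 ≤ i → i < α.sum → ¬ Descent α T i →
    ∃ r c, IsCell α r (c + 1) ∧ T.entry r c = i + 1 ∧ T.entry r (c + 1) = i

/-- `T` is a sink tableau: every descent of `T` is an attacking descent. -/
def IsSink (α : List ℕ) (T : SRCT α) : Prop := ∀ i, Descent α T i → Attacking α T i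

/-- The cell `(r,c)` is a removable node of the diagram of `α` (0-indexed): it is the last
cell of row `r`, and either `r` is the top row or no earlier part equals `α_r - 1`
(with `α_r ≥ 2`). -/
def Removable (α : List ℕ) (r c : ℕ) : Prop :=
  IsCell α r c ∧ c + 1 = α.getD r 0 ∧
    (r = 0 ∨ (2 ≤ α.getD r 0 ∧ ∀ i < r, α.getD i 0 ≠ α.getD r 0 - 1))

/-- The cell `(r,c)` of `T` contains the smallest entry in its column. -/
def MinInCol (α : List ℕ) (T : SRCT α) (r c : ℕ) : Prop :=
  ∀ r', IsCell α r' c → T.entry r c ≤ T.entry r' c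

/-- The set of columns containing a distinguished removable node (a removable node holding
the smallest entry of its column); this depends only on the `∼_α`-class of `T`. -/
def DRN (α : List ℕ) (T : SRCT α) : Set ℕ :=
  {c | ∃ r, Removable α r c ∧ MinInCol α T r c}

/-! ### Auxiliary lemmas -/

lemma aux_getD_le_maxPart (α : List ℕ) (r : ℕ) : α.getD r 0 ≤ maxPart α := by
  induction α generalizing r with
  | nil => simp [maxPart]
  | cons a l ih =>
    cases r with
    | zero =>
      simp only [List.getD_cons_zero, maxPart, List.foldr_cons]
      exact le_max_left _ _
    | succ r =>
      simp only [List.getD_cons_succ, maxPart, List.foldr_cons]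
      exact le_trans (ih r) (le_max_right _ _)

lemma aux_filterMap_len (α : List ℕ) (T T' : SRCT α) (c : ℕ) (l : List ℕ) :
    (l.filterMap fun r' => if IsCell α r' c then some (T.entry r' c) else none).length
      = (l.filterMap fun r' => if IsCell α r' c then some (T'.entry r' c) else none).length := by
  induction l with
  | nil => rfl
  | cons a l ih =>
    by_cases h : IsCell α a c <;> simp [List.filterMap_cons, h, ih]

lemma aux_mem_colList {α : List ℕ} {T : SRCT α} {c y : ℕ} :
    y ∈ colList α T c ↔ ∃ r, IsCell α r c ∧ T.entry r c = y := by
  unfold colList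
  simp only [List.mem_filterMap, List.mem_range]
  constructor
  · rintro ⟨r, hr, hy⟩
    by_cases h : IsCell α r c
    · simp only [h, if_true, Option.some.injEq] at hy
      exact ⟨r, h, hy⟩
    · simp [h] at hy
  · rintro ⟨r, h, hy⟩
    exact ⟨r, h.1, by simp [h, hy]⟩

lemma aux_nodup_colList (α : List ℕ) (T : SRCT α) (c : ℕ) : (colList α T c).Nodup := by
  apply List.Nodup.filterMap ?_ List.nodup_range
  intro a a' b hb hb'
  by_cases h : IsCell α a c
  · by_cases h' : IsCell α a' c
    · simp only [h, if_true, Option.mem_def, Option.some.injEq] at hb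
      simp only [h', if_true, Option.mem_def, Option.some.injEq] at hb'
      exact (T.inj a c a' c h h' (hb.trans hb'.symm)).1
    · simp [h'] at hb'
  · simp [h] at hb

lemma aux_colList_decomp (α : List ℕ) (T : SRCT α) {r c : ℕ} (h : IsCell α r c) :
    colList α T c =
      ((List.range r).filterMap fun r' => if IsCell α r' c then some (T.entry r' c) else none)
        ++ T.entry r c ::
      (((List.range (α.length - (r + 1))).map fun x => r + 1 + x).filterMap
         fun r' => if IsCell α r' c then some (T.entry r' c) else none) := by
  have hlen : α.length = (r + 1) + (α.length - (r + 1)) := by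
    have := h.1; omega
  unfold colList
  conv_lhs => rw [hlen, List.range_add, List.range_succ]
  rw [List.filterMap_append, List.filterMap_append]
  simp [List.filterMap_cons, h, List.append_assoc]

lemma aux_rank_gen (A B A' B' : List ℕ) (e e' : ℕ) (hA : A.length = A'.length)
    (hst : stdWord (A ++ e :: B) = stdWord (A' ++ e' :: B')) :
    ((A ++ e :: B).filter fun y => decide (y ≤ e)).length
      = ((A' ++ e' :: B').filter fun y => decide (y ≤ e')).length := by
  unfold stdWord at hst
  rw [List.map_append, List.map_append, List.map_cons, List.map_cons] at hst
  have hlenA : (A.map fun x => ((A ++ e :: B).filter fun y => decide (y ≤ x)).length).length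
      = (A'.map fun x => ((A' ++ e' :: B').filter fun y => decide (y ≤ x)).length).length := by
    rw [List.length_map, List.length_map]; exact hA
  obtain ⟨-, h2⟩ := List.append_inj hst hlenA
  exact (List.cons_eq_cons.mp h2).1

lemma aux_minInCol_iff (α : List ℕ) (T : SRCT α) {r c : ℕ} (h : IsCell α r c) :
    MinInCol α T r c ↔
      ((colList α T c).filter fun y => decide (y ≤ T.entry r c)).length = 1 := by
  constructor
  · intro hmin
    have hcongr : ((colList α T c).filter fun y => decide (y ≤ T.entry r c))
        = ((colList α T c).filter fun y => y == T.entry r c) := by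
      apply List.filter_congr
      intro x hx
      obtain ⟨r', h', hx'⟩ := aux_mem_colList.mp hx
      have hle : T.entry r c ≤ x := hx' ▸ hmin r' h'
      by_cases hxe : x = T.entry r c
      · simp [hxe]
      · have hx2 : ¬ x ≤ T.entry r c := by omega
        simp [hxe, hx2]
    rw [hcongr, ← List.countP_eq_length_filter]
    have hmem : T.entry r c ∈ colList α T c := aux_mem_colList.mpr ⟨r, h, rfl⟩
    have := List.count_eq_one_of_mem (aux_nodup_colList α T c) hmem
    simpa [List.count] using this
  · intro hlen r' h'
    by_contra hcon
    have hlt : T.entry r' c < T.entry r c := by omega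
    obtain ⟨a, ha⟩ := List.length_eq_one_iff.mp hlen
    have he : T.entry r c ∈ (colList α T c).filter fun y => decide (y ≤ T.entry r c) :=
      List.mem_filter.mpr ⟨aux_mem_colList.mpr ⟨r, h, rfl⟩, by simp⟩
    have hx : T.entry r' c ∈ (colList α T c).filter fun y => decide (y ≤ T.entry r c) :=
      List.mem_filter.mpr ⟨aux_mem_colList.mpr ⟨r', h', rfl⟩,
        by simp only [decide_eq_true_eq]; omega⟩
    rw [ha, List.mem_singleton] at he hx
    omega

lemma aux_flatMap_eq (f g : ℕ → List ℕ) (hlen : ∀ c, (f c).length = (g c).length) :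
    ∀ k, (List.range k).flatMap f = (List.range k).flatMap g → ∀ c < k, f c = g c := by
  intro k
  induction k with
  | zero => intro _ c hc; exact absurd hc (by omega)
  | succ k ih =>
    intro h c hc
    rw [List.range_succ, List.flatMap_append, List.flatMap_append] at h
    have hl : ((List.range k).flatMap f).length = ((List.range k).flatMap g).length := by
      rw [List.length_flatMap, List.length_flatMap]
      congr 1
      apply List.map_congr_left
      intro x _
      simp [Function.comp, hlen x]
    obtain ⟨h1, h2⟩ := List.append_inj h hl
    rcases Nat.lt_succ_iff_lt_or_eq.mp hc with h' | h'
    · exact ih h1 c h'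
    · subst h'
      simpa using h2

lemma aux_minInCol_congr (α : List ℕ) (T T' : SRCT α)
    (hst : stWord α T = stWord α T') {r c : ℕ} (h : IsCell α r c) :
    (MinInCol α T r c ↔ MinInCol α T' r c) := by
  have hc : c < maxPart α := lt_of_lt_of_le h.2 (aux_getD_le_maxPart α r)
  have hlen : ∀ c', (stdWord (colList α T c')).length = (stdWord (colList α T' c')).length := by
    intro c'
    unfold stdWord
    rw [List.length_map, List.length_map]
    unfold colList
    exact aux_filterMap_len α T T' c' _
  have hcol : stdWord (colList α T c) = stdWord (colList α T' c) :=
    aux_flatMap_eq (fun c' => stdWord (colList α T c')) (fun c' => stdWord (colList α T' c'))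
      hlen (maxPart α) hst c hc
  rw [aux_minInCol_iff α T h, aux_minInCol_iff α T' h,
    aux_colList_decomp α T h, aux_colList_decomp α T' h]
  rw [aux_colList_decomp α T h, aux_colList_decomp α T' h] at hcol
  rw [aux_rank_gen _ _ _ _ _ _ (aux_filterMap_len α T T' c (List.range r)) hcol]

lemma aux_DRN_congr (α : List ℕ) (T T' : SRCT α) (hst : stWord α T = stWord α T') :
    DRN α T = DRN α T' := by
  ext c
  constructor
  · rintro ⟨r, hrem, hmin⟩
    exact ⟨r, hrem, (aux_minInCol_congr α T T' hst hrem.1).mp hmin⟩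
  · rintro ⟨r, hrem, hmin⟩
    exact ⟨r, hrem, (aux_minInCol_congr α T T' hst hrem.1).mpr hmin⟩

/-- In a source tableau of an equivalence class `E`, the distinguished removable node in the
smallest column of `DRN(α,E)` contains the entry `1`. -/
theorem source_one_in_least_DRN_column (n : ℕ) (α : List ℕ) (hpos : ∀ a ∈ α, 0 < a)
    (hsum : α.sum = n) (T Tsrc : SRCT α) (hcl : Tsrc ∈ stClass α T)
    (hsrc : IsSource α Tsrc) (m : ℕ) (hm : IsLeast (DRN α T) m) :
    ∃ r, Removable α r m ∧ MinInCol α Tsrc r m ∧ Tsrc.entry r m = 1 := by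
  have hstw : stWord α Tsrc = stWord α T := hcl
  have hDRN : DRN α T = DRN α Tsrc := aux_DRN_congr α T Tsrc hstw.symm
  obtain ⟨r, hrem, hmin⟩ : m ∈ DRN α Tsrc := hDRN ▸ hm.1
  have hcell : IsCell α r m := hrem.1
  have he1 : 1 ≤ Tsrc.entry r m := Tsrc.one_le r m hcell
  have hes : Tsrc.entry r m ≤ α.sum := Tsrc.le_sum r m hcell
  obtain ⟨r₁, c₁, hc1, h1⟩ := Tsrc.surj 1 le_rfl (le_trans he1 hes)
  have hrowend : c₁ + 1 = α.getD r₁ 0 := by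
    rcases Nat.lt_or_ge (c₁ + 1) (α.getD r₁ 0) with hlt | hge
    · exfalso
      have hc' : IsCell α r₁ (c₁ + 1) := ⟨hc1.1, hlt⟩
      have h01 := Tsrc.row_dec r₁ c₁ hc'
      have h02 := Tsrc.one_le r₁ (c₁ + 1) hc'
      omega
    · have := hc1.2; omega
  have hne1 : ∀ r' c', IsCell α r' c' → (r' ≠ r₁ ∨ c' ≠ c₁) → 1 < Tsrc.entry r' c' := by
    intro r' c' h' hne
    have hle := Tsrc.one_le r' c' h'
    rcases Nat.lt_or_ge 1 (Tsrc.entry r' c') with hgt | hle2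
    · exact hgt
    · exfalso
      have heq : Tsrc.entry r' c' = 1 := by omega
      obtain ⟨h1', h2'⟩ := Tsrc.inj r' c' r₁ c₁ h' hc1 (heq.trans h1.symm)
      tauto
  have hrem1 : Removable α r₁ c₁ := by
    refine ⟨hc1, hrowend, ?_⟩
    by_cases hr0 : r₁ = 0
    · exact Or.inl hr0
    · right
      have hlen0 : 0 < α.length := lt_of_le_of_lt (Nat.zero_le _) hc1.1
      have h2 : 2 ≤ α.getD r₁ 0 := by
        rcases Nat.lt_or_ge (α.getD r₁ 0) 2 with hlt | hge
        · exfalso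
          have hc0 : c₁ = 0 := by have := hc1.2; omega
          have hcz : IsCell α 0 0 := by
            refine ⟨hlen0, ?_⟩
            have hmem : α.getD 0 0 ∈ α := by
              rw [List.getD_eq_getElem α 0 hlen0]
              exact List.getElem_mem _
            exact hpos _ hmem
          have hinc := Tsrc.col1_inc 0 r₁ (Nat.pos_of_ne_zero hr0) hcz (hc0 ▸ hc1)
          have h00 := Tsrc.one_le 0 0 hcz
          rw [hc0] at h1
          omega
        · exact hge
      refine ⟨h2, ?_⟩
      intro i hi hieq
      have hci : α.getD i 0 = c₁ := by omega
      have hcellL : IsCell α i (c₁ - 1) := ⟨lt_trans hi hc1.1, by omega⟩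
      have hstep : c₁ - 1 + 1 = c₁ := by omega
      have hlt : Tsrc.entry r₁ (c₁ - 1 + 1) < Tsrc.entry i (c₁ - 1) := by
        rw [hstep, h1]
        exact hne1 i (c₁ - 1) hcellL (Or.inl (by omega))
      have htr := Tsrc.triple i r₁ (c₁ - 1) hi hcellL (by rw [hstep]; exact hc1) hlt
      have hbad : c₁ - 1 + 1 < α.getD i 0 := htr.1.2
      omega
  have hmin1 : MinInCol α Tsrc r₁ c₁ := fun r' h' => by
    rw [h1]; exact Tsrc.one_le r' c₁ h'
  have hc1DRN : c₁ ∈ DRN α T := by rw [hDRN]; exact ⟨r₁, hrem1, hmin1⟩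
  have hmlec1 : m ≤ c₁ := hm.2 hc1DRN
  rcases Nat.lt_or_ge (Tsrc.entry r m) 2 with hecase | hecase
  · have he : Tsrc.entry r m = 1 := by omega
    exact ⟨r, hrem, hmin, he⟩
  · exfalso
    set e := Tsrc.entry r m with hedef
    have key : ∀ k, 1 ≤ k → k ≤ e - 1 →
        ∃ r' c', IsCell α r' c' ∧ Tsrc.entry r' c' = e - k ∧ c' < m := by
      intro k
      induction k with
      | zero => intro hk _; exact absurd hk (by omega)
      | succ k ih =>
        intro _ hk
        have hj1 : 1 ≤ e - (k + 1) := by omega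
        have hjs : e - (k + 1) < α.sum := by omega
        by_cases hdes : Descent α Tsrc (e - (k + 1))
        · obtain ⟨a, b, a', b', hab, hab', hea, hea', hbb⟩ := hdes
          rcases Nat.eq_zero_or_pos k with hk0 | hk0
          · subst hk0
            have heq : Tsrc.entry a' b' = e := by omega
            obtain ⟨hra, hrb⟩ := Tsrc.inj a' b' r m hab' hcell (by rw [heq, hedef])
            rcases Nat.lt_or_ge b m with hblt | hbge
            · exact ⟨a, b, hab, hea, hblt⟩
            · exfalso
              have hbm' : b = m := by omega
              have hge := hmin a (hbm' ▸ hab)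
              rw [hbm'] at hea
              omega
          · obtain ⟨r', c', hcell', hent', hlt'⟩ := ih (by omega) (by omega)
            have hsucc : e - (k + 1) + 1 = e - k := by omega
            have heq : Tsrc.entry a' b' = Tsrc.entry r' c' := by
              rw [hea', hent', hsucc]
            obtain ⟨-, hb'c⟩ := Tsrc.inj a' b' r' c' hab' hcell' heq
            exact ⟨a, b, hab, hea, by omega⟩
        · obtain ⟨r'', c'', hrc, hent1, hent0⟩ := hsrc (e - (k + 1)) hj1 hjs hdes
          have hrcL : IsCell α r'' c'' := ⟨hrc.1, by have := hrc.2; omega⟩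
          rcases Nat.eq_zero_or_pos k with hk0 | hk0
          · subst hk0
            have heq : Tsrc.entry r'' c'' = e := by omega
            obtain ⟨hra, hrb⟩ := Tsrc.inj r'' c'' r m hrcL hcell (by rw [heq, hedef])
            have hrend : m + 1 = α.getD r 0 := hrem.2.1
            have hx := hrc
            rw [hra, hrb] at hx
            have := hx.2
            omega
          · obtain ⟨r', c', hcell', hent', hlt'⟩ := ih (by omega) (by omega)
            have hsucc : e - (k + 1) + 1 = e - k := by omega
            have heq : Tsrc.entry r'' c'' = Tsrc.entry r' c' := by
              rw [hent1, hent', hsucc]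
            obtain ⟨hre, hce⟩ := Tsrc.inj r'' c'' r' c' hrcL hcell' heq
            rcases Nat.lt_or_ge (c'' + 1) m with hlt2 | hge2
            · exact ⟨r'', c'' + 1, hrc, hent0, hlt2⟩
            · exfalso
              have hcm : c'' + 1 = m := by omega
              have hge := hmin r'' (hcm ▸ hrc)
              rw [hcm] at hent0
              omega
    obtain ⟨r', c', hcell', hent', hlt'⟩ := key (e - 1) (by omega) le_rfl
    have hone : Tsrc.entry r' c' = 1 := by rw [hent']; omega
    obtain ⟨-, hc⟩ := Tsrc.inj r' c' r₁ c₁ hcell' hc1 (hone.trans h1.symm)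
    omega
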